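/- arXiv:2402.01892 — 6 statements merged into one kernel-verified Lean document; each statement's English description precedes it below -/
import Mathlib

section
/- For a random variable X with strictly increasing continuous CDF F, the function λ ↦ λ + (1/(1-α))·E[max(X − λ, 0)] is minimized at λ* equal to the α-quantile of X, i.e., the unique λ* with F(λ*) = α. -/
open MeasureTheory Set

/-- For an integrable random variable `X` with continuous, strictly increasing CDF `F`,
the function `λ ↦ λ + (1/(1-α))·E[max(X − λ, 0)]` is minimized at any `λ*` with `F λ* = α`. -/
theorem stmt1 {Ω : Type*} [MeasurableSpace Ω] (ℙ : Measure Ω) [IsProbabilityMeasure ℙ]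
    (X : Ω → ℝ) (hX : Integrable X ℙ) (α : ℝ) (hα : α ∈ Ioo (0 : ℝ) 1)
    (F : ℝ → ℝ) (hF : ∀ x, F x = (ℙ {ω | X ω ≤ x}).toReal)
    (hFc : Continuous F) (hFm : StrictMono F)
    (lamStar : ℝ) (hlam : F lamStar = α) :
    ∀ lam : ℝ,
      lamStar + (1 - α)⁻¹ * ∫ ω, max (X ω - lamStar) 0 ∂ℙ ≤
        lam + (1 - α)⁻¹ * ∫ ω, max (X ω - lam) 0 ∂ℙ := by
  intro lam
  obtain ⟨hα0, hα1⟩ := hα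
  have h1α : (0:ℝ) < 1 - α := by linarith
  -- measurable version of X
  set Y : Ω → ℝ := hX.1.mk X with hYdef
  have hYm : StronglyMeasurable Y := hX.1.stronglyMeasurable_mk
  have hXY : X =ᵐ[ℙ] Y := hX.1.ae_eq_mk
  set s : Set Ω := {ω | lamStar < Y ω} with hsdef
  have hs : MeasurableSet s := hYm.measurable measurableSet_Ioi
  -- measure of s
  have hcompl : ℙ sᶜ = ℙ {ω | X ω ≤ lamStar} := by
    apply measure_congr
    rw [Filter.eventuallyEq_set]
    filter_upwards [hXY] with ω hω
    simp [hsdef, hω, not_lt]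
  have hμs : (ℙ s).toReal = 1 - α := by
    have h1 : ℙ sᶜ = 1 - ℙ s := prob_compl_eq_one_sub hs
    have h2 : (ℙ {ω | X ω ≤ lamStar}).toReal = α := by rw [← hF, hlam]
    have hle : ℙ s ≤ 1 := prob_le_one
    have h3 : (ℙ sᶜ).toReal = 1 - (ℙ s).toReal := by
      rw [h1, ENNReal.toReal_sub_of_le hle ENNReal.one_ne_top, ENNReal.toReal_one]
    rw [hcompl, h2] at h3
    linarith
  -- integrability
  have hint1 : Integrable (fun ω => max (X ω - lamStar) 0) ℙ :=
    (hX.sub (integrable_const lamStar)).pos_part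
  have hint2 : Integrable (fun ω => max (X ω - lam) 0) ℙ :=
    (hX.sub (integrable_const lam)).pos_part
  have hind : Integrable (fun ω => (lam - lamStar) * s.indicator (fun _ => (1:ℝ)) ω) ℙ :=
    ((integrable_const (1:ℝ)).indicator hs).const_mul _
  -- pointwise inequality
  have hpt : ∀ᵐ ω ∂ℙ, max (X ω - lamStar) 0 ≤
      max (X ω - lam) 0 + (lam - lamStar) * s.indicator (fun _ => (1:ℝ)) ω := by
    filter_upwards [hXY] with ω hω
    by_cases h : ω ∈ s
    · have hx : lamStar < X ω := by rw [hω]; exact h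
      rw [Set.indicator_of_mem h]
      have := le_max_left (X ω - lam) (0:ℝ)
      have h2 : max (X ω - lamStar) 0 = X ω - lamStar := max_eq_left (by linarith)
      linarith
    · have hx : X ω ≤ lamStar := by rw [hω]; exact not_lt.mp h
      rw [Set.indicator_of_notMem h]
      have := le_max_right (X ω - lam) (0:ℝ)
      have h2 : max (X ω - lamStar) 0 = 0 := max_eq_right (by linarith)
      linarith
  have hIneq : ∫ ω, max (X ω - lamStar) 0 ∂ℙ ≤
      ∫ ω, max (X ω - lam) 0 ∂ℙ + (lam - lamStar) * (1 - α) := by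
    have := integral_mono_ae hint1 (hint2.add hind) hpt
    simp only [Pi.add_apply] at this
    rw [integral_add hint2 hind, MeasureTheory.integral_const_mul,
      integral_indicator_const (1:ℝ) hs, smul_eq_mul, mul_one, measureReal_def, hμs] at this
    linarith
  have hc : (1 - α)⁻¹ * (1 - α) = 1 := inv_mul_cancel₀ (ne_of_gt h1α)
  have hcpos : (0:ℝ) < (1 - α)⁻¹ := inv_pos.mpr h1α
  have h := mul_le_mul_of_nonneg_left hIneq hcpos.le
  rw [mul_add, mul_comm (lam - lamStar) (1 - α), ← mul_assoc, hc, one_mul] at h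
  linarith
end

section
/- For a random variable X with continuous strictly increasing CDF, the minimum value of λ ↦ λ + (1/(1-α))·E[max(X − λ, 0)] equals the α-superquantile Q̄_α(X) = Q_α(X) + (1/(1-α))·E[max(X − Q_α(X), 0)]. -/
open MeasureTheory Set Filter

/-- For an integrable random variable `X` with continuous, strictly increasing CDF, the minimum
value of `λ ↦ λ + (1/(1-α))·E[max(X − λ, 0)]` equals the α-superquantile
`Q_α + (1/(1-α))·E[max(X − Q_α, 0)]`, where `Q_α = sInf {z | F z ≥ α}`. -/
theorem stmt2 {Ω : Type*} [MeasurableSpace Ω] (ℙ : Measure Ω) [IsProbabilityMeasure ℙ]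
    (X : Ω → ℝ) (hX : Integrable X ℙ) (α : ℝ) (hα : α ∈ Ioo (0 : ℝ) 1)
    (F : ℝ → ℝ) (hF : ∀ x, F x = (ℙ {ω | X ω ≤ x}).toReal)
    (hFc : Continuous F) (hFm : StrictMono F)
    (Q : ℝ) (hQ : Q = sInf {z : ℝ | α ≤ F z}) :
    sInf (Set.range fun lam : ℝ => lam + (1 - α)⁻¹ * ∫ ω, max (X ω - lam) 0 ∂ℙ) =
      Q + (1 - α)⁻¹ * ∫ ω, max (X ω - Q) 0 ∂ℙ := by
  obtain ⟨hα0, hα1⟩ := hα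
  -- measurable representative
  set Y : Ω → ℝ := hX.1.mk X with hYdef
  have hYm : Measurable Y := hX.1.stronglyMeasurable_mk.measurable
  have hXY : X =ᵐ[ℙ] Y := hX.1.ae_eq_mk
  have hYint : Integrable Y ℙ := hX.congr hXY
  have hsets : ∀ x : ℝ, ℙ {ω | Y ω ≤ x} = ℙ {ω | X ω ≤ x} := by
    intro x
    refine measure_congr ?_
    filter_upwards [hXY] with ω h
    change (Y ω ≤ x) = (X ω ≤ x)
    rw [h]
  have hFY : ∀ x, F x = (ℙ {ω | Y ω ≤ x}).toReal := fun x => by rw [hF x, hsets x]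
  -- ProbabilityTheory.cdf of the pushforward
  set μ : Measure ℝ := ℙ.map Y with hμdef
  have : IsProbabilityMeasure μ := Measure.isProbabilityMeasure_map hYm.aemeasurable
  have hFcdf : ∀ x, F x = ProbabilityTheory.cdf μ x := by
    intro x
    rw [hFY x, ProbabilityTheory.cdf_eq_real, measureReal_def, hμdef, Measure.map_apply hYm measurableSet_Iic]
    rfl
  -- F Q = α
  have hFtop : Tendsto F atTop (nhds 1) := by
    simp only [funext hFcdf]; exact ProbabilityTheory.tendsto_cdf_atTop μ
  have hFbot : Tendsto F atBot (nhds 0) := by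
    simp only [funext hFcdf]; exact ProbabilityTheory.tendsto_cdf_atBot μ
  obtain ⟨b, hb⟩ := (hFtop.eventually (eventually_gt_nhds hα1)).exists
  obtain ⟨a, ha⟩ := (hFbot.eventually (eventually_lt_nhds hα0)).exists
  have hab : a ≤ b := le_of_lt (hFm.lt_iff_lt.mp (ha.trans hb))
  obtain ⟨z₀, hz₀mem, hz₀⟩ : ∃ z₀ ∈ Icc a b, F z₀ = α := by
    have := intermediate_value_Icc hab hFc.continuousOn (⟨ha.le, hb.le⟩ : α ∈ Icc (F a) (F b))
    obtain ⟨z, hz, hzv⟩ := this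
    exact ⟨z, hz, hzv⟩
  have hQz : Q = z₀ := by
    rw [hQ]
    have : {z : ℝ | α ≤ F z} = Ici z₀ := by
      ext z
      simp only [Set.mem_setOf_eq, Set.mem_Ici, ← hz₀, hFm.le_iff_le]
    rw [this, csInf_Ici]
  have hFQ : F Q = α := by rw [hQz]; exact hz₀
  -- probability of {Y > Q}
  have hPgt : (ℙ {ω | Q < Y ω}).toReal = 1 - α := by
    have h1 : (ℙ {ω | Y ω ≤ Q}).toReal = α := (hFY Q).symm.trans hFQ
    have hms : MeasurableSet {ω | Y ω ≤ Q} := hYm measurableSet_Iic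
    have hcomp : {ω | Q < Y ω} = {ω | Y ω ≤ Q}ᶜ := by ext ω; simp [not_le]
    rw [hcomp, measure_compl hms (measure_ne_top _ _), measure_univ,
      ENNReal.toReal_sub_of_le prob_le_one ENNReal.one_ne_top, ENNReal.toReal_one, h1]
  set c : ℝ := 1 - α with hc
  have hcpos : 0 < c := by simp [hc]; linarith
  -- integrals with Y
  have hintY : ∀ lam : ℝ, Integrable (fun ω => max (Y ω - lam) 0) ℙ :=
    fun lam => (hYint.sub (integrable_const lam)).pos_part
  have hintX : ∀ lam : ℝ, (∫ ω, max (X ω - lam) 0 ∂ℙ) = ∫ ω, max (Y ω - lam) 0 ∂ℙ := by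
    intro lam
    refine integral_congr_ae ?_
    filter_upwards [hXY] with ω h
    rw [h]
  -- key inequality
  have key : ∀ lam : ℝ,
      Q + c⁻¹ * ∫ ω, max (Y ω - Q) 0 ∂ℙ ≤ lam + c⁻¹ * ∫ ω, max (Y ω - lam) 0 ∂ℙ := by
    intro lam
    set s : Set Ω := {ω | Q < Y ω} with hs
    have hsm : MeasurableSet s := hYm measurableSet_Ioi
    have hind : Integrable (s.indicator fun _ => (lam - Q)) ℙ :=
      (integrable_indicator_iff hsm).2 (integrableOn_const (measure_ne_top _ _))
    have hmono : ∀ ω, max (Y ω - Q) 0 - s.indicator (fun _ => (lam - Q)) ω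
        ≤ max (Y ω - lam) 0 := by
      intro ω
      by_cases h : Q < Y ω
      · rw [Set.indicator_of_mem (show ω ∈ s from h)]
        rw [max_eq_left (by linarith : (0:ℝ) ≤ Y ω - Q)]
        have hr : Y ω - Q - (lam - Q) = Y ω - lam := by ring
        rw [hr]
        exact le_max_left _ _
      · rw [Set.indicator_of_notMem (show ω ∉ s from h)]
        push_neg at h
        rw [max_eq_right (by linarith : Y ω - Q ≤ 0)]
        simp [le_max_right]
    have hIle : (∫ ω, max (Y ω - Q) 0 ∂ℙ) - (lam - Q) * c ≤ ∫ ω, max (Y ω - lam) 0 ∂ℙ := by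
      have hsub : (∫ ω, (max (Y ω - Q) 0 - s.indicator (fun _ => lam - Q) ω) ∂ℙ)
          = (∫ ω, max (Y ω - Q) 0 ∂ℙ) - (lam - Q) * (ℙ s).toReal := by
        rw [integral_sub (hintY Q) hind, integral_indicator_const _ hsm, smul_eq_mul, mul_comm]
        rfl
      have hmain := integral_mono
        (f := fun ω => max (Y ω - Q) 0 - s.indicator (fun _ => lam - Q) ω)
        (g := fun ω => max (Y ω - lam) 0) ((hintY Q).sub hind) (hintY lam) hmono
      rw [hsub] at hmain
      calc (∫ ω, max (Y ω - Q) 0 ∂ℙ) - (lam - Q) * c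
          = (∫ ω, max (Y ω - Q) 0 ∂ℙ) - (lam - Q) * (ℙ s).toReal := by rw [hPgt]
        _ ≤ _ := hmain
    have h2 : c⁻¹ * ((∫ ω, max (Y ω - Q) 0 ∂ℙ) - (lam - Q) * c)
        ≤ c⁻¹ * ∫ ω, max (Y ω - lam) 0 ∂ℙ :=
      mul_le_mul_of_nonneg_left hIle (inv_nonneg.2 hcpos.le)
    have h3 : c⁻¹ * ((∫ ω, max (Y ω - Q) 0 ∂ℙ) - (lam - Q) * c)
        = c⁻¹ * (∫ ω, max (Y ω - Q) 0 ∂ℙ) - (lam - Q) := by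
      field_simp
    rw [h3] at h2
    linarith
  -- conclude
  have hleast : IsLeast (Set.range fun lam : ℝ => lam + (1 - α)⁻¹ * ∫ ω, max (X ω - lam) 0 ∂ℙ)
      (Q + (1 - α)⁻¹ * ∫ ω, max (X ω - Q) 0 ∂ℙ) := by
    constructor
    · exact ⟨Q, rfl⟩
    · rintro y ⟨lam, rfl⟩
      dsimp only
      rw [hintX lam, hintX Q]
      exact key lam
  exact hleast.csInf_eq
end

section
/- For a random variable X with continuous strictly increasing CDF, the α-superquantile equals the conditional expectation of X given X ≥ Q_α(X): Q̄_α(X) = E[X | X ≥ Q_α(X)]. -/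
open MeasureTheory Set

/-- For an integrable random variable `X` with continuous, strictly increasing CDF, the
α-superquantile equals the conditional expectation of `X` given `X ≥ Q_α`. -/
theorem stmt3 {Ω : Type*} [MeasurableSpace Ω] (ℙ : Measure Ω) [IsProbabilityMeasure ℙ]
    (X : Ω → ℝ) (hX : Integrable X ℙ) (α : ℝ) (hα : α ∈ Ioo (0 : ℝ) 1)
    (F : ℝ → ℝ) (hF : ∀ x, F x = (ℙ {ω | X ω ≤ x}).toReal)
    (hFc : Continuous F) (hFm : StrictMono F)
    (Q : ℝ) (hQ : Q = sInf {z : ℝ | α ≤ F z}) :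
    Q + (1 - α)⁻¹ * ∫ ω, max (X ω - Q) 0 ∂ℙ =
      (∫ ω in {ω | Q ≤ X ω}, X ω ∂ℙ) / (ℙ {ω | Q ≤ X ω}).toReal := by
  obtain ⟨hα0, hα1⟩ := hα
  obtain ⟨Y, hYm, hXY⟩ := hX.1
  have hYmeas : Measurable Y := hYm.measurable
  have hYint : Integrable Y ℙ := hX.congr hXY
  -- sets agree a.e.
  have hsub : ∀ x : ℝ, {ω | X ω ≤ x} =ᵐ[ℙ] {ω | Y ω ≤ x} := by
    intro x
    filter_upwards [hXY] with ω h
    show (X ω ≤ x) = (Y ω ≤ x)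
    rw [h]
  have hsge : {ω | Q ≤ X ω} =ᵐ[ℙ] {ω | Q ≤ Y ω} := by
    filter_upwards [hXY] with ω h
    show (Q ≤ X ω) = (Q ≤ Y ω)
    rw [h]
  have hF' : ∀ x, F x = (ℙ {ω | Y ω ≤ x}).toReal := fun x => by
    rw [hF x, measure_congr (hsub x)]
  -- the pushforward measure and its cdf
  set μ : Measure ℝ := Measure.map Y ℙ with hμ
  have : IsProbabilityMeasure μ := Measure.isProbabilityMeasure_map hYmeas.aemeasurable
  have hFcdf : ∀ x, F x = ProbabilityTheory.cdf μ x := fun x => by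
    rw [ProbabilityTheory.cdf_eq_real, measureReal_def, hμ, Measure.map_apply hYmeas measurableSet_Iic,
      hF' x]
    rfl
  have hFtop : Filter.Tendsto F Filter.atTop (nhds 1) := by
    rw [funext hFcdf]; exact ProbabilityTheory.tendsto_cdf_atTop μ
  have hFbot : Filter.Tendsto F Filter.atBot (nhds 0) := by
    rw [funext hFcdf]; exact ProbabilityTheory.tendsto_cdf_atBot μ
  -- F Q = α
  set S := {z : ℝ | α ≤ F z} with hS
  have hSne : S.Nonempty := (hFtop.eventually (eventually_ge_nhds hα1)).exists
  obtain ⟨w, hw⟩ : ∃ w, F w < α := (hFbot.eventually (eventually_lt_nhds hα0)).exists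
  have hbdd : BddBelow S := ⟨w, fun z hz => le_of_not_gt fun h =>
    absurd hz (not_le.2 ((hFm h).trans hw))⟩
  have hQS : α ≤ F Q := by
    have : Q ∈ S := hQ ▸ IsClosed.csInf_mem (isClosed_le continuous_const hFc) hSne hbdd
    exact this
  have hFQ : F Q = α := by
    refine le_antisymm ?_ hQS
    by_contra h
    push_neg at h
    have hwQ : w < Q := hFm.lt_iff_lt.mp (hw.trans h)
    obtain ⟨z, hz, hFz⟩ := intermediate_value_Icc hwQ.le hFc.continuousOn ⟨hw.le, h.le⟩
    have hzS : z ∈ S := hFz.ge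
    have hQz : Q ≤ z := hQ ▸ csInf_le hbdd hzS
    have : z < Q := hFm.lt_iff_lt.mp (hFz.trans_lt h)
    exact absurd hQz (not_le.2 this)
  -- measure computations
  have hIic : (μ (Iic Q)).toReal = α := by
    rw [← hFQ, hFcdf Q, ProbabilityTheory.cdf_eq_real, measureReal_def]
  have hatom : μ {Q} = 0 := by
    have hle : ∀ x < Q, (μ {Q}).toReal ≤ F Q - F x := by
      intro x hx
      have hsub2 : ({Q} : Set ℝ) ⊆ Iic Q \ Iic x := fun y hy => by
        simp only [mem_singleton_iff] at hy
        subst hy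
        exact ⟨mem_Iic.2 le_rfl, fun hmem => (not_le.2 hx) (mem_Iic.1 hmem)⟩
      have hdiff : μ (Iic Q \ Iic x) = μ (Iic Q) - μ (Iic x) :=
        measure_diff (Iic_subset_Iic.2 hx.le) measurableSet_Iic.nullMeasurableSet
          (measure_ne_top μ _)
      calc (μ {Q}).toReal ≤ (μ (Iic Q \ Iic x)).toReal :=
            ENNReal.toReal_mono (measure_ne_top μ _) (measure_mono hsub2)
        _ = F Q - F x := by
            rw [hdiff, ENNReal.toReal_sub_of_le (measure_mono (Iic_subset_Iic.2 hx.le))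
              (measure_ne_top μ _)]
            congr 1 <;> rw [hFcdf, ProbabilityTheory.cdf_eq_real, measureReal_def]
    have htend : Filter.Tendsto (fun x => F Q - F x) (nhdsWithin Q (Iio Q))
        (nhds 0) := by
      have h3 : Filter.Tendsto (fun x => F Q - F x) (nhds Q) (nhds (F Q - F Q)) :=
        (continuous_const.sub hFc).tendsto Q
      rw [sub_self] at h3
      exact h3.mono_left nhdsWithin_le_nhds
    have h0 : (μ {Q}).toReal ≤ 0 :=
      ge_of_tendsto htend (eventually_nhdsWithin_of_forall fun x hx => hle x hx)
    have := le_antisymm h0 ENNReal.toReal_nonneg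
    rw [ENNReal.toReal_eq_zero_iff] at this
    exact this.resolve_right (measure_ne_top μ _)
  have hIio : μ (Iio Q) = μ (Iic Q) := by
    rw [show Iio Q = Iic Q \ {Q} from (Iic_diff_right).symm, measure_diff_null hatom]
  have hIci : (μ (Ici Q)).toReal = 1 - α := by
    have hc : μ (Ici Q) = 1 - μ (Iio Q) := by
      have h2 := measure_compl (μ := μ) measurableSet_Iio (measure_ne_top μ (Iio Q))
      rw [compl_Iio, measure_univ] at h2
      exact h2
    rw [hc, hIio, ENNReal.toReal_sub_of_le (measure_mono (subset_univ _) |>.trans_eq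
      measure_univ) ENNReal.one_ne_top, ENNReal.toReal_one, hIic]
  -- the event in terms of Y
  have hsetm : MeasurableSet {ω | Q ≤ Y ω} := hYmeas measurableSet_Ici
  have hPset : (ℙ {ω | Q ≤ X ω}).toReal = 1 - α := by
    rw [measure_congr hsge, ← hIci, hμ, Measure.map_apply hYmeas measurableSet_Ici]
    rfl
  have h1α : (0 : ℝ) < 1 - α := by linarith
  -- integral transfers
  have hmax : ∫ ω, max (X ω - Q) 0 ∂ℙ = ∫ ω, max (Y ω - Q) 0 ∂ℙ :=
    integral_congr_ae (by filter_upwards [hXY] with ω h; rw [h])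
  have hsetint : ∫ ω in {ω | Q ≤ X ω}, X ω ∂ℙ = ∫ ω in {ω | Q ≤ Y ω}, Y ω ∂ℙ := by
    rw [setIntegral_congr_set hsge]
    exact integral_congr_ae (ae_restrict_of_ae hXY)
  -- compute the max-integral
  have hind : (fun ω => max (Y ω - Q) 0) =
      ({ω | Q ≤ Y ω}).indicator (fun ω => Y ω - Q) := by
    funext ω
    by_cases h : Q ≤ Y ω
    · rw [indicator_of_mem (show ω ∈ {ω | Q ≤ Y ω} from h)]
      exact max_eq_left (by linarith)
    · rw [indicator_of_notMem (show ω ∉ {ω | Q ≤ Y ω} from h)]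
      push_neg at h
      exact max_eq_right (by linarith)
  have hmaxint : ∫ ω, max (Y ω - Q) 0 ∂ℙ =
      (∫ ω in {ω | Q ≤ Y ω}, Y ω ∂ℙ) - (1 - α) * Q := by
    rw [hind, integral_indicator hsetm]
    have h1 : IntegrableOn Y {ω | Q ≤ Y ω} ℙ := hYint.integrableOn
    have h2 : IntegrableOn (fun _ => Q) {ω | Q ≤ Y ω} ℙ :=
      (integrable_const Q).integrableOn
    rw [integral_sub h1 h2, setIntegral_const]
    have : (ℙ {ω | Q ≤ Y ω}).toReal = 1 - α := by
      rw [← measure_congr hsge, hPset]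
    rw [measureReal_def, this, smul_eq_mul]
  rw [hmax, hmaxint, hPset, hsetint]
  field_simp
  ring
end

section
/- For a random variable X with continuous strictly increasing CDF, the α-superquantile equals the average of θ-quantiles over θ ∈ [α, 1]: Q̄_α(X) = (1/(1-α))·∫_α^1 Q_θ(X) dθ. -/
open MeasureTheory Set
open scoped ENNReal

/-- For an integrable random variable `X` with continuous, strictly increasing CDF, the
α-superquantile equals the average of the θ-quantiles over `θ ∈ [α, 1]`. -/
theorem stmt4 {Ω : Type*} [MeasurableSpace Ω] (ℙ : Measure Ω) [IsProbabilityMeasure ℙ]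
    (X : Ω → ℝ) (hX : Integrable X ℙ) (α : ℝ) (hα : α ∈ Ioo (0 : ℝ) 1)
    (F : ℝ → ℝ) (hF : ∀ x, F x = (ℙ {ω | X ω ≤ x}).toReal)
    (hFc : Continuous F) (hFm : StrictMono F)
    (Q : ℝ → ℝ) (hQ : ∀ θ, Q θ = sInf {z : ℝ | θ ≤ F z}) :
    Q α + (1 - α)⁻¹ * ∫ ω, max (X ω - Q α) 0 ∂ℙ =
      (1 - α)⁻¹ * ∫ θ in α..1, Q θ := by
  obtain ⟨hα0, hα1⟩ := hα
  -- a measurable representative of X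
  have hXam : AEMeasurable X ℙ := hX.aestronglyMeasurable.aemeasurable
  set X' : Ω → ℝ := hXam.mk X with hX'def
  have hX'm : Measurable X' := hXam.measurable_mk
  have hXX' : X =ᵐ[ℙ] X' := hXam.ae_eq_mk
  -- basic facts about F
  have hF0 : ∀ x, 0 ≤ F x := fun x => (hF x) ▸ ENNReal.toReal_nonneg
  have hP : ∀ x, ℙ {ω | X' ω ≤ x} = ENNReal.ofReal (F x) := by
    intro x
    have hsets : {ω | X ω ≤ x} =ᵐ[ℙ] {ω | X' ω ≤ x} :=
      hXX'.mono fun ω h => congrArg (fun t : ℝ => t ≤ x) h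
    rw [← measure_congr hsets, hF x, ENNReal.ofReal_toReal (measure_ne_top ℙ _)]
  set μ : Measure ℝ := ℙ.map X' with hμdef
  haveI : IsProbabilityMeasure μ := Measure.isProbabilityMeasure_map hX'm.aemeasurable
  have hcdf : ∀ x, ProbabilityTheory.cdf μ x = F x := by
    intro x
    rw [ProbabilityTheory.cdf_eq_real, measureReal_def, hμdef, Measure.map_apply hX'm measurableSet_Iic,
      show X' ⁻¹' Iic x = {ω | X' ω ≤ x} from rfl, hP, ENNReal.toReal_ofReal (hF0 x)]
  have hFtop : Filter.Tendsto F Filter.atTop (nhds 1) := by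
    have h := ProbabilityTheory.tendsto_cdf_atTop μ
    rwa [show ⇑(ProbabilityTheory.cdf μ) = F from funext hcdf] at h
  have hFbot : Filter.Tendsto F Filter.atBot (nhds 0) := by
    have h := ProbabilityTheory.tendsto_cdf_atBot μ
    rwa [show ⇑(ProbabilityTheory.cdf μ) = F from funext hcdf] at h
  -- quantile facts
  have hSne : ∀ θ : ℝ, θ < 1 → {z : ℝ | θ ≤ F z}.Nonempty := by
    intro θ hθ
    exact (hFtop.eventually (eventually_ge_nhds hθ)).exists
  have hSbdd : ∀ θ : ℝ, 0 < θ → BddBelow {z : ℝ | θ ≤ F z} := by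
    intro θ hθ
    obtain ⟨z0, hz0⟩ := Filter.eventually_atBot.1 (hFbot.eventually (eventually_lt_nhds hθ))
    exact ⟨z0, fun z hz => not_lt.1 fun h => absurd hz (not_le.2 (hz0 z h.le))⟩
  have hQmem : ∀ θ : ℝ, 0 < θ → θ < 1 → θ ≤ F (Q θ) := by
    intro θ h0 h1
    have hcl : IsClosed {z : ℝ | θ ≤ F z} := isClosed_le continuous_const hFc
    have := hcl.csInf_mem (hSne θ h1) (hSbdd θ h0)
    rw [hQ θ]; exact this
  have hFQ : ∀ θ : ℝ, 0 < θ → θ < 1 → F (Q θ) = θ := by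
    intro θ h0 h1
    refine le_antisymm ?_ (hQmem θ h0 h1)
    by_contra hlt
    push_neg at hlt
    have hev : ∀ᶠ z in nhds (Q θ), θ < F z :=
      hFc.continuousAt.eventually (eventually_gt_nhds hlt)
    have hev2 : ∀ᶠ z in nhdsWithin (Q θ) (Iio (Q θ)), θ < F z ∧ z ∈ Iio (Q θ) :=
      (hev.filter_mono nhdsWithin_le_nhds).and self_mem_nhdsWithin
    obtain ⟨z, hz1, hz2⟩ := hev2.exists
    have : Q θ ≤ z := by rw [hQ θ]; exact csInf_le (hSbdd θ h0) hz1.le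
    exact absurd hz2 (not_lt.2 this)
  have hiff : ∀ θ : ℝ, 0 < θ → θ < 1 → ∀ x : ℝ, x < Q θ ↔ F x < θ := by
    intro θ h0 h1 x
    constructor
    · intro h
      by_contra hle; push_neg at hle
      have : Q θ ≤ x := by rw [hQ θ]; exact csInf_le (hSbdd θ h0) hle
      exact absurd h (not_lt.2 this)
    · intro h
      have h2 : F x < F (Q θ) := by rw [hFQ θ h0 h1]; exact h
      exact hFm.lt_iff_lt.1 h2
  set q : ℝ := Q α with hqdef
  have hqF : F q = α := hFQ α hα0 hα1
  have hQge : ∀ θ ∈ Ioo α 1, q ≤ Q θ := by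
    intro θ hθ
    rw [hqdef, hQ α]
    exact csInf_le (hSbdd α hα0) (le_of_lt (lt_of_lt_of_le hθ.1 (hQmem θ (hα0.trans hθ.1) hθ.2)))
  have hmeas1 : MeasurableSet {p : ℝ × ℝ | F p.2 < p.1} :=
    measurableSet_lt (hFc.measurable.comp measurable_snd) measurable_fst
  have hmeas2 : MeasurableSet {p : Ω × ℝ | p.2 < X' p.1} :=
    measurableSet_lt measurable_snd (hX'm.comp measurable_fst)
  have step1 : ∀ θ ∈ Ioo α 1, ENNReal.ofReal (Q θ - q)
      = ∫⁻ x in Ioi q, {p : ℝ × ℝ | F p.2 < p.1}.indicator 1 (θ, x) := by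
    intro θ hθ
    have h0 : 0 < θ := hα0.trans hθ.1
    have hind : ∀ x : ℝ, {p : ℝ × ℝ | F p.2 < p.1}.indicator 1 (θ, x)
        = (Iio (Q θ)).indicator (1 : ℝ → ℝ≥0∞) x := by
      intro x
      by_cases h : x < Q θ
      · have h' : F x < θ := (hiff θ h0 hθ.2 x).1 h
        simp [Set.indicator_apply, h, h']
      · have h' : ¬ F x < θ := fun hc => h ((hiff θ h0 hθ.2 x).2 hc)
        simp [Set.indicator_apply, h, h']
    simp only [hind]
    rw [lintegral_indicator_one measurableSet_Iio, Measure.restrict_apply measurableSet_Iio,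
      Set.Iio_inter_Ioi, Real.volume_Ioo]
  have key1 : ∫⁻ θ in Ioo α 1, ENNReal.ofReal (Q θ - q)
      = ∫⁻ x in Ioi q, ENNReal.ofReal (1 - F x) := by
    have hswap := lintegral_lintegral_swap (μ := volume.restrict (Ioo α 1))
      (ν := volume.restrict (Ioi q))
      (f := fun θ x => {p : ℝ × ℝ | F p.2 < p.1}.indicator 1 (θ, x))
      ((measurable_one.indicator hmeas1).aemeasurable)
    rw [setLIntegral_congr_fun measurableSet_Ioo step1, hswap]
    refine setLIntegral_congr_fun measurableSet_Ioi (fun x hx => ?_)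
    have hFx : α ≤ F x := by rw [← hqF]; exact hFm.le_iff_le.2 (le_of_lt hx)
    have hind : ∀ θ : ℝ, {p : ℝ × ℝ | F p.2 < p.1}.indicator 1 (θ, x)
        = (Ioi (F x)).indicator (1 : ℝ → ℝ≥0∞) θ := by
      intro θ
      by_cases h : F x < θ <;> simp [Set.indicator_apply, h]
    simp only [hind]
    rw [lintegral_indicator_one measurableSet_Ioi, Measure.restrict_apply measurableSet_Ioi]
    have hset : Ioi (F x) ∩ Ioo α 1 = Ioo (F x) 1 := by
      ext θ
      simp only [mem_inter_iff, mem_Ioi, mem_Ioo]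
      constructor
      · rintro ⟨h1, _, h3⟩; exact ⟨h1, h3⟩
      · rintro ⟨h1, h2⟩; exact ⟨h1, lt_of_le_of_lt hFx h1, h2⟩
    rw [hset, Real.volume_Ioo]
  have step2 : ∀ ω : Ω, ENNReal.ofReal (X' ω - q)
      = ∫⁻ x in Ioi q, {p : Ω × ℝ | p.2 < X' p.1}.indicator 1 (ω, x) := by
    intro ω
    have hind : ∀ x : ℝ, {p : Ω × ℝ | p.2 < X' p.1}.indicator 1 (ω, x)
        = (Iio (X' ω)).indicator (1 : ℝ → ℝ≥0∞) x := by
      intro x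
      by_cases h : x < X' ω <;> simp [Set.indicator_apply, h]
    simp only [hind]
    rw [lintegral_indicator_one measurableSet_Iio, Measure.restrict_apply measurableSet_Iio,
      Set.Iio_inter_Ioi, Real.volume_Ioo]
  have key2 : ∫⁻ ω, ENNReal.ofReal (X' ω - q) ∂ℙ
      = ∫⁻ x in Ioi q, ENNReal.ofReal (1 - F x) := by
    have hswap := lintegral_lintegral_swap (μ := ℙ) (ν := volume.restrict (Ioi q))
      (f := fun ω x => {p : Ω × ℝ | p.2 < X' p.1}.indicator 1 (ω, x))
      ((measurable_one.indicator hmeas2).aemeasurable)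
    rw [lintegral_congr step2, hswap]
    refine setLIntegral_congr_fun measurableSet_Ioi (fun x hx => ?_)
    have hind : ∀ ω : Ω, {p : Ω × ℝ | p.2 < X' p.1}.indicator 1 (ω, x)
        = {ω : Ω | x < X' ω}.indicator (1 : Ω → ℝ≥0∞) ω := by
      intro ω
      by_cases h : x < X' ω <;> simp [Set.indicator_apply, h]
    simp only [hind]
    rw [lintegral_indicator_one (show MeasurableSet {ω : Ω | x < X' ω} from hX'm measurableSet_Ioi)]
    have hcompl : {ω : Ω | x < X' ω} = {ω : Ω | X' ω ≤ x}ᶜ := by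
      ext ω; simp [not_le]
    rw [hcompl, prob_compl_eq_one_sub (s := {ω : Ω | X' ω ≤ x}) (hX'm measurableSet_Iic), hP x,
      ENNReal.ofReal_sub 1 (hF0 x), ENNReal.ofReal_one]
  have hmax : ∀ t : ℝ, ENNReal.ofReal (max t 0) = ENNReal.ofReal t := by
    intro t
    rcases le_total t 0 with h | h
    · rw [max_eq_right h, ENNReal.ofReal_zero, eq_comm]
      exact ENNReal.ofReal_eq_zero.2 h
    · rw [max_eq_left h]
  have hgint : Integrable (fun ω => max (X ω - q) 0) ℙ := (hX.sub (integrable_const q)).pos_part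
  have hgnn : 0 ≤ᵐ[ℙ] fun ω => max (X ω - q) 0 := ae_of_all _ fun ω => le_max_right _ _
  have hlX : ∫⁻ ω, ENNReal.ofReal (max (X ω - q) 0) ∂ℙ
      = ∫⁻ x in Ioi q, ENNReal.ofReal (1 - F x) := by
    rw [← key2]
    refine lintegral_congr_ae (hXX'.mono fun ω h => ?_)
    dsimp only
    rw [hmax (X ω - q), h]
  have hfin : ∫⁻ x in Ioi q, ENNReal.ofReal (1 - F x) < ⊤ := by
    rw [← hlX]
    exact (hasFiniteIntegral_iff_ofReal hgnn).1 hgint.hasFiniteIntegral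
  have hI : ∫ ω, max (X ω - q) 0 ∂ℙ = (∫⁻ x in Ioi q, ENNReal.ofReal (1 - F x)).toReal := by
    rw [integral_eq_lintegral_of_nonneg_ae hgnn hgint.aestronglyMeasurable, hlX]
  set Qt : ℝ → ℝ := (Ioo α 1).indicator Q with hQtdef
  have hQle : ∀ θ ∈ Ioo α 1, ∀ x : ℝ, Q θ ≤ x ↔ θ ≤ F x := by
    intro θ hθ x
    rw [← not_lt (a := x), ← not_lt (a := F x), not_iff_not]
    exact hiff θ (hα0.trans hθ.1) hθ.2 x
  have hQtm : Measurable Qt := by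
    apply measurable_of_Iic
    intro x
    by_cases hx : (0:ℝ) ≤ x
    · have hpre : Qt ⁻¹' Iic x = (Ioo α 1 ∩ Iic (F x)) ∪ (Ioo α 1)ᶜ := by
        ext θ
        by_cases hθ : θ ∈ Ioo α 1
        · simp [hQtdef, indicator_of_mem hθ, hθ, hQle θ hθ x]
        · simp [hQtdef, indicator_of_notMem hθ, hθ, hx]
      rw [hpre]
      exact (measurableSet_Ioo.inter measurableSet_Iic).union measurableSet_Ioo.compl
    · have hpre : Qt ⁻¹' Iic x = Ioo α 1 ∩ Iic (F x) := by
        ext θ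
        by_cases hθ : θ ∈ Ioo α 1
        · simp [hQtdef, indicator_of_mem hθ, hθ, hQle θ hθ x]
        · simp [hQtdef, indicator_of_notMem hθ, hθ, hx]
      rw [hpre]
      exact measurableSet_Ioo.inter measurableSet_Iic
  have hQae : Qt =ᵐ[volume.restrict (Ioo α 1)] Q := indicator_ae_eq_restrict measurableSet_Ioo
  have hsub_nn : 0 ≤ᵐ[volume.restrict (Ioo α 1)] fun θ => Q θ - q :=
    (ae_restrict_iff' measurableSet_Ioo).2 (ae_of_all _ fun θ hθ => sub_nonneg.2 (hQge θ hθ))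
  have hsub_meas : AEStronglyMeasurable (fun θ => Q θ - q) (volume.restrict (Ioo α 1)) :=
    ((hQtm.sub measurable_const).aestronglyMeasurable).congr (hQae.sub Filter.EventuallyEq.rfl)
  have hsub_int : Integrable (fun θ => Q θ - q) (volume.restrict (Ioo α 1)) := by
    refine ⟨hsub_meas, ?_⟩
    rw [hasFiniteIntegral_iff_ofReal hsub_nn]
    exact key1 ▸ hfin
  have hsub_eq : ∫ θ in Ioo α 1, (Q θ - q) = ∫ ω, max (X ω - q) 0 ∂ℙ := by
    rw [integral_eq_lintegral_of_nonneg_ae hsub_nn hsub_meas, key1, hI]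
  have hJ : ∫ θ in α..1, Q θ = ∫ ω, max (X ω - q) 0 ∂ℙ + (1 - α) * q := by
    rw [intervalIntegral.integral_of_le hα1.le, integral_Ioc_eq_integral_Ioo]
    have hsplit : ∫ θ in Ioo α 1, Q θ = ∫ θ in Ioo α 1, ((Q θ - q) + q) := by
      congr 1
      ext θ
      ring
    rw [hsplit, integral_add hsub_int (integrable_const q), hsub_eq, setIntegral_const,
      Real.volume_real_Ioo, max_eq_left (by linarith), smul_eq_mul]
  rw [hJ]
  have h1α : (1:ℝ) - α ≠ 0 := ne_of_gt (by linarith)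
  field_simp
  ring
end

section
/- The derivative with respect to α of the α-superquantile is given by ∂Q̄_α(X)/∂α = (1/(1-α)²)·E[max(X − Q_α(X), 0)], and in particular is nonnegative. -/
open MeasureTheory Set Filter Topology

namespace Stmt8Aux

variable {Ω : Type*} [MeasurableSpace Ω] {ℙ : Measure Ω} [IsProbabilityMeasure ℙ]
  {X : Ω → ℝ}

lemma int_max (hX : Integrable X ℙ) (l : ℝ) :
    Integrable (fun ω => max (X ω - l) 0) ℙ :=
  (hX.sub (integrable_const l)).pos_part

lemma lip (hX : Integrable X ℙ) (l m : ℝ) :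
    |(∫ ω, max (X ω - l) 0 ∂ℙ) - ∫ ω, max (X ω - m) 0 ∂ℙ| ≤ |l - m| := by
  rw [← integral_sub (int_max hX l) (int_max hX m)]
  calc |∫ ω, (max (X ω - l) 0 - max (X ω - m) 0) ∂ℙ|
      ≤ ∫ ω, |max (X ω - l) 0 - max (X ω - m) 0| ∂ℙ := by
        simpa [Real.norm_eq_abs] using
          norm_integral_le_integral_norm (fun ω => max (X ω - l) 0 - max (X ω - m) 0) (μ := ℙ)
    _ ≤ ∫ _ω, |l - m| ∂ℙ := by
        refine integral_mono ((int_max hX l).sub (int_max hX m)).abs (integrable_const _) ?_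
        intro ω
        calc |max (X ω - l) 0 - max (X ω - m) 0| ≤ |(X ω - l) - (X ω - m)| :=
              abs_max_sub_max_le_abs _ _ _
          _ = |l - m| := by rw [abs_sub_comm]; ring_nf
    _ = |l - m| := by simp

lemma key (hXm : StronglyMeasurable X) (hX : Integrable X ℙ)
    {a Q : ℝ} (ha : a < 1) (hQa : (ℙ {ω | X ω ≤ Q}).toReal = a) (m : ℝ) :
    Q + (1 - a)⁻¹ * ∫ ω, max (X ω - Q) 0 ∂ℙ ≤ m + (1 - a)⁻¹ * ∫ ω, max (X ω - m) 0 ∂ℙ := by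
  have h1a : (0:ℝ) < 1 - a := by linarith
  set S : Set Ω := {ω | Q < X ω} with hS_def
  have hS : MeasurableSet S := measurableSet_lt measurable_const hXm.measurable
  have hScompl : Sᶜ = {ω | X ω ≤ Q} := by
    ext ω; simp [hS_def, not_lt]
  have hPS : (ℙ S).toReal = 1 - a := by
    have h1 : (ℙ S).toReal + (ℙ Sᶜ).toReal = 1 := by
      rw [← ENNReal.toReal_add (measure_ne_top _ _) (measure_ne_top _ _),
        measure_add_measure_compl hS, measure_univ, ENNReal.toReal_one]
    rw [hScompl, hQa] at h1; linarith
  have hind : Integrable (S.indicator fun _ => (1:ℝ)) ℙ :=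
    (integrable_const (1:ℝ)).indicator hS
  have hindint : ∫ ω, S.indicator (fun _ => (1:ℝ)) ω ∂ℙ = 1 - a := by
    rw [integral_indicator_const (1:ℝ) hS, smul_eq_mul, mul_one]; exact hPS
  have hc0 : (0:ℝ) ≤ (1 - a)⁻¹ := le_of_lt (inv_pos.2 h1a)
  have hc1 : (1 - a)⁻¹ * (1 - a) = 1 := inv_mul_cancel₀ (ne_of_gt h1a)
  rcases le_total Q m with hQm | hQm
  · -- Q ≤ m
    have hpt : ∀ ω, max (X ω - Q) 0 - (m - Q) * S.indicator (fun _ => (1:ℝ)) ω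
        ≤ max (X ω - m) 0 := by
      intro ω
      by_cases h : Q < X ω
      · have : S.indicator (fun _ => (1:ℝ)) ω = 1 := Set.indicator_of_mem (show ω ∈ S from h) _
        rw [this, mul_one]
        have h2 : max (X ω - Q) 0 = X ω - Q := max_eq_left (by linarith)
        rw [h2]
        have : X ω - m ≤ max (X ω - m) 0 := le_max_left _ _
        linarith
      · have hi : S.indicator (fun _ => (1:ℝ)) ω = 0 := Set.indicator_of_notMem (show ω ∉ S from h) _
        push_neg at h
        have h2 : max (X ω - Q) 0 = 0 := max_eq_right (by linarith)
        rw [hi, h2]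
        simp [le_max_right]
    have hint : ∫ ω, (max (X ω - Q) 0 - (m - Q) * S.indicator (fun _ => (1:ℝ)) ω) ∂ℙ
        ≤ ∫ ω, max (X ω - m) 0 ∂ℙ :=
      integral_mono ((int_max hX Q).sub (hind.const_mul _)) (int_max hX m) hpt
    rw [integral_sub (int_max hX Q) (hind.const_mul _), integral_const_mul _ _, hindint] at hint
    nlinarith [mul_le_mul_of_nonneg_left hint hc0]
  · -- m ≤ Q
    have hpt : ∀ ω, max (X ω - Q) 0 + (Q - m) * S.indicator (fun _ => (1:ℝ)) ω
        ≤ max (X ω - m) 0 := by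
      intro ω
      by_cases h : Q < X ω
      · have : S.indicator (fun _ => (1:ℝ)) ω = 1 := Set.indicator_of_mem (show ω ∈ S from h) _
        rw [this, mul_one]
        have h2 : max (X ω - Q) 0 = X ω - Q := max_eq_left (by linarith)
        rw [h2]
        have : X ω - m ≤ max (X ω - m) 0 := le_max_left _ _
        linarith
      · have hi : S.indicator (fun _ => (1:ℝ)) ω = 0 := Set.indicator_of_notMem (show ω ∉ S from h) _
        push_neg at h
        have h2 : max (X ω - Q) 0 = 0 := max_eq_right (by linarith)
        rw [hi, h2]
        simp [le_max_right]
    have hint : ∫ ω, (max (X ω - Q) 0 + (Q - m) * S.indicator (fun _ => (1:ℝ)) ω) ∂ℙ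
        ≤ ∫ ω, max (X ω - m) 0 ∂ℙ :=
      integral_mono ((int_max hX Q).add (hind.const_mul _)) (int_max hX m) hpt
    rw [integral_add (int_max hX Q) (hind.const_mul _), integral_const_mul _ _, hindint] at hint
    nlinarith [mul_le_mul_of_nonneg_left hint hc0]

lemma minval (hXm : StronglyMeasurable X) (hX : Integrable X ℙ)
    {a Q : ℝ} (ha : a < 1) (hQa : (ℙ {ω | X ω ≤ Q}).toReal = a) :
    sInf (Set.range fun lam : ℝ => lam + (1 - a)⁻¹ * ∫ ω, max (X ω - lam) 0 ∂ℙ)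
      = Q + (1 - a)⁻¹ * ∫ ω, max (X ω - Q) 0 ∂ℙ := by
  apply le_antisymm
  · refine csInf_le ⟨Q + (1 - a)⁻¹ * ∫ ω, max (X ω - Q) 0 ∂ℙ, ?_⟩ ⟨Q, rfl⟩
    rintro x ⟨l, rfl⟩
    exact key hXm hX ha hQa l
  · refine le_csInf (Set.range_nonempty _) ?_
    rintro x ⟨l, rfl⟩
    exact key hXm hX ha hQa l

lemma quantile_exists {F : ℝ → ℝ} (hFc : Continuous F)
    (h0 : Tendsto F atBot (𝓝 0)) (h1 : Tendsto F atTop (𝓝 1))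
    {a : ℝ} (ha0 : 0 < a) (ha1 : a < 1) : ∃ z, F z = a := by
  obtain ⟨b, hb⟩ := (h1.eventually_const_le ha1).exists
  obtain ⟨c, hc⟩ := (h0.eventually_le_const ha0).exists
  obtain ⟨z, hz⟩ := intermediate_value_univ c b hFc ⟨hc, hb⟩
  exact ⟨z, hz⟩

end Stmt8Aux

open Stmt8Aux in
/-- The derivative of the α-superquantile (expressed as the minimum value of the
Rockafellar–Uryasev objective) with respect to `α` is `(1/(1-α)²)·E[max(X − Q_α, 0)]`,
which is nonnegative. -/
theorem stmt8 {Ω : Type*} [MeasurableSpace Ω] (ℙ : Measure Ω) [IsProbabilityMeasure ℙ]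
    (X : Ω → ℝ) (hX : Integrable X ℙ) (α : ℝ) (hα : α ∈ Ioo (0 : ℝ) 1)
    (F : ℝ → ℝ) (hF : ∀ x, F x = (ℙ {ω | X ω ≤ x}).toReal)
    (hFc : Continuous F) (hFm : StrictMono F)
    (Q : ℝ) (hQ : Q = sInf {z : ℝ | α ≤ F z}) :
    HasDerivAt
      (fun a : ℝ =>
        sInf (Set.range fun lam : ℝ => lam + (1 - a)⁻¹ * ∫ ω, max (X ω - lam) 0 ∂ℙ))
      (((1 - α)⁻¹) ^ 2 * ∫ ω, max (X ω - Q) 0 ∂ℙ) α ∧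
      0 ≤ ((1 - α)⁻¹) ^ 2 * ∫ ω, max (X ω - Q) 0 ∂ℙ := by
  obtain ⟨hα0, hα1⟩ := hα
  have h1α : (0:ℝ) < 1 - α := by linarith
  -- nonnegativity
  have hnn : 0 ≤ ((1 - α)⁻¹) ^ 2 * ∫ ω, max (X ω - Q) 0 ∂ℙ :=
    mul_nonneg (sq_nonneg _) (integral_nonneg fun ω => le_max_right _ _)
  refine ⟨?_, hnn⟩
  -- measurable version of X
  set X' : Ω → ℝ := hX.1.mk X with hX'def
  have hXm : StronglyMeasurable X' := hX.1.stronglyMeasurable_mk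
  have hae : X =ᵐ[ℙ] X' := hX.1.ae_eq_mk
  have hX' : Integrable X' ℙ := hX.congr hae
  have hIX : ∀ l : ℝ, (∫ ω, max (X ω - l) 0 ∂ℙ) = ∫ ω, max (X' ω - l) 0 ∂ℙ := fun l =>
    integral_congr_ae (by filter_upwards [hae] with ω h; rw [h])
  have hF' : ∀ x, F x = (ℙ {ω | X' ω ≤ x}).toReal := by
    intro x
    rw [hF x]
    congr 1
    apply measure_congr
    rw [Filter.eventuallyEq_set]
    filter_upwards [hae] with ω h
    simp [Set.mem_setOf_eq, h]
  -- cdf limits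
  have hμ : IsProbabilityMeasure (ℙ.map X') :=
    Measure.isProbabilityMeasure_map hXm.measurable.aemeasurable
  have hFeq : F = fun x => ProbabilityTheory.cdf (ℙ.map X') x := by
    funext x
    rw [ProbabilityTheory.cdf_eq_real, Measure.real, Measure.map_apply hXm.measurable measurableSet_Iic,
      hF' x]
    rfl
  have hFbot : Tendsto F atBot (𝓝 0) := by
    rw [hFeq]; exact ProbabilityTheory.tendsto_cdf_atBot _
  have hFtop : Tendsto F atTop (𝓝 1) := by
    rw [hFeq]; exact ProbabilityTheory.tendsto_cdf_atTop _
  -- quantile function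
  have hqex : ∀ a ∈ Ioo (0:ℝ) 1, ∃ z, F z = a := fun a ha =>
    quantile_exists hFc hFbot hFtop ha.1 ha.2
  choose! q hq using hqex
  -- F Q = α
  have hQset : {z : ℝ | α ≤ F z} = Ici (q α) := by
    have hqα : F (q α) = α := hq α ⟨hα0, hα1⟩
    ext z
    simp only [Set.mem_setOf_eq, Set.mem_Ici]
    conv_lhs => rw [← hqα]
    exact hFm.le_iff_le
  have hQq : Q = q α := by rw [hQ, hQset, csInf_Ici]
  have hFQ : F Q = α := by rw [hQq]; exact hq α ⟨hα0, hα1⟩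
  -- measure hypotheses for key/minval
  have hmQ : (ℙ {ω | X' ω ≤ Q}).toReal = α := by rw [← hF', hFQ]
  have hmq : ∀ a ∈ Ioo (0:ℝ) 1, (ℙ {ω | X' ω ≤ q a}).toReal = a := fun a ha => by
    rw [← hF', hq a ha]
  simp only [hIX]
  set m : ℝ → ℝ := fun a =>
    sInf (Set.range fun lam : ℝ => lam + (1 - a)⁻¹ * ∫ ω, max (X' ω - lam) 0 ∂ℙ) with hm_def
  -- value of m
  have hmα : m α = Q + (1 - α)⁻¹ * ∫ ω, max (X' ω - Q) 0 ∂ℙ :=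
    minval hXm hX' hα1 hmQ
  have hmb : ∀ b ∈ Ioo (0:ℝ) 1,
      m b = q b + (1 - b)⁻¹ * ∫ ω, max (X' ω - (q b)) 0 ∂ℙ := fun b hb =>
    minval hXm hX' hb.2 (hmq b hb)
  -- derivative of g
  have hg : HasDerivAt (fun a : ℝ => (1 - a)⁻¹) (((1 - α)⁻¹) ^ 2) α := by
    have h1 : HasDerivAt (fun a : ℝ => 1 - a) (-1) α := by
      simpa using (hasDerivAt_id α).const_sub 1
    have h2 := h1.inv (ne_of_gt h1α)
    rw [neg_neg, one_div, ← inv_pow] at h2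
    exact h2
  rw [hasDerivAt_iff_tendsto_slope]
  have hgs : Tendsto (slope (fun a : ℝ => (1 - a)⁻¹) α) (𝓝[≠] α)
      (𝓝 (((1 - α)⁻¹) ^ 2)) := hasDerivAt_iff_tendsto_slope.1 hg
  -- q b → Q
  have hqt : Tendsto (fun b => |q b - Q|) (𝓝[≠] α) (𝓝 0) := by
    rw [Metric.tendsto_nhdsWithin_nhds]
    intro ε hε
    have hFl : F (Q - ε) < α := by
      rw [← hFQ]; exact hFm (by linarith)
    have hFr : α < F (Q + ε) := by
      rw [← hFQ]; exact hFm (by linarith)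
    refine ⟨min (min (α - F (Q - ε)) (F (Q + ε) - α)) (min α (1 - α)), ?_, ?_⟩
    · apply lt_min (lt_min (by linarith) (by linarith)) (lt_min hα0 h1α)
    · intro b _hb hdist
      rw [Real.dist_eq] at hdist
      rw [lt_min_iff, lt_min_iff, lt_min_iff] at hdist
      obtain ⟨⟨h1, h2⟩, h3, h4⟩ := hdist
      rw [abs_sub_lt_iff] at h1 h2 h3 h4
      have hb01 : b ∈ Ioo (0:ℝ) 1 := ⟨by linarith, by linarith⟩
      have hqb : F (q b) = b := hq b hb01
      have hl : Q - ε < q b := by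
        rw [← hFm.lt_iff_lt, hqb]; linarith
      have hr : q b < Q + ε := by
        rw [← hFm.lt_iff_lt, hqb]; linarith
      rw [Real.dist_eq, sub_zero, abs_abs, abs_sub_lt_iff]
      constructor <;> linarith
  -- the error term tends to 0
  have hbig : Tendsto (fun b => slope m α b -
      slope (fun a : ℝ => (1 - a)⁻¹) α b * ∫ ω, max (X' ω - Q) 0 ∂ℙ) (𝓝[≠] α) (𝓝 0) := by
    apply squeeze_zero_norm' (a := fun b =>
      |slope (fun a : ℝ => (1 - a)⁻¹) α b| * |q b - Q|)
    · have hmem : Ioo (0:ℝ) 1 ∈ 𝓝[≠] α :=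
        mem_nhdsWithin_of_mem_nhds (Ioo_mem_nhds hα0 hα1)
      filter_upwards [hmem, self_mem_nhdsWithin] with b hb hbne
      have hbne' : b ≠ α := fun h => hbne (by simp [h])
      have hba : b - α ≠ 0 := sub_ne_zero.2 hbne'
      set IQ := ∫ ω, max (X' ω - Q) 0 ∂ℙ with hIQ
      set Ib := ∫ ω, max (X' ω - (q b)) 0 ∂ℙ with hIb
      set d := (1 - b)⁻¹ - (1 - α)⁻¹ with hd
      -- envelope inequalities
      have hub : m b - m α ≤ d * IQ := by
        have h1 : m b ≤ Q + (1 - b)⁻¹ * IQ := by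
          rw [hmb b hb]
          exact key hXm hX' hb.2 (hmq b hb) Q
        rw [hmα]
        simp only [hd]
        nlinarith [h1]
      have hlb : d * Ib ≤ m b - m α := by
        have h1 : m α ≤ q b + (1 - α)⁻¹ * Ib := by
          rw [hmα]
          exact key hXm hX' hα1 hmQ (q b)
        rw [hmb b hb]
        simp only [hd]
        nlinarith [h1]
      have hlip : |Ib - IQ| ≤ |q b - Q| := lip hX' (q b) Q
      have hnum : |m b - m α - d * IQ| ≤ |d| * |q b - Q| := by
        rw [abs_le]
        constructor
        · have h1 : |d * (Ib - IQ)| ≤ |d| * |q b - Q| := by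
            rw [abs_mul]
            exact mul_le_mul_of_nonneg_left hlip (abs_nonneg d)
          have h2 : -(|d| * |q b - Q|) ≤ d * (Ib - IQ) := neg_le_of_abs_le h1 |>.trans_eq rfl
          nlinarith [h2, hlb]
        · have := mul_nonneg (abs_nonneg d) (abs_nonneg (q b - Q))
          linarith [hub]
      -- convert to slopes
      have hsl : slope m α b - slope (fun a : ℝ => (1 - a)⁻¹) α b * IQ
          = (m b - m α - d * IQ) / (b - α) := by
        simp only [slope_def_field]
        rw [div_mul_eq_mul_div, div_sub_div_same, ← hd]
      have hslope2 : |slope (fun a : ℝ => (1 - a)⁻¹) α b| = |d| / |b - α| := by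
        simp only [slope_def_field]
        rw [← hd, abs_div]
      rw [Real.norm_eq_abs, hsl, abs_div, hslope2, div_mul_eq_mul_div]
      exact div_le_div_of_nonneg_right hnum (abs_nonneg _)
    · have : Tendsto (fun b => |slope (fun a : ℝ => (1 - a)⁻¹) α b|) (𝓝[≠] α)
          (𝓝 |((1 - α)⁻¹) ^ 2|) := hgs.abs
      simpa using this.mul hqt
  have hfinal := hbig.add (hgs.mul_const (∫ ω, max (X' ω - Q) 0 ∂ℙ))
  rw [zero_add] at hfinal
  have hfe : (fun b => (slope m α b -
      slope (fun a : ℝ => (1 - a)⁻¹) α b * ∫ ω, max (X' ω - Q) 0 ∂ℙ) +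
      slope (fun a : ℝ => (1 - a)⁻¹) α b * ∫ ω, max (X' ω - Q) 0 ∂ℙ) = slope m α := by
    funext b
    ring
  rw [hfe] at hfinal
  exact hfinal
end

section
/- For the standard logistic distribution with CDF F(x) = 1/(1 + e^{-x/s}) with scale s > 0, the α-quantile is Q_α = s·ln(α/(1-α)) and the α-superquantile equals s·H(α)/(1-α), where H(α) = −α·ln α − (1-α)·ln(1-α). -/
open Set MeasureTheory Real
open intervalIntegral

lemma log_intervalIntegrable_zero_one : IntervalIntegrable Real.log volume 0 1 := by
  rw [intervalIntegrable_iff_integrableOn_Ioc_of_le (by norm_num)]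
  apply integrableOn_Ioc_of_intervalIntegral_norm_bounded_left
    (I := 1) (l := Filter.atTop) (a := fun n : ℕ => ((n : ℝ) + 1)⁻¹)
  · intro n
    have h0 : (0 : ℝ) < ((n : ℝ) + 1)⁻¹ := by positivity
    have := intervalIntegrable_log (μ := volume) (a := ((n : ℝ) + 1)⁻¹) (b := 1)
      (notMem_uIcc_of_lt h0 one_pos)
    rcases le_or_gt (((n : ℝ) + 1)⁻¹) 1 with h | h
    · exact (intervalIntegrable_iff_integrableOn_Ioc_of_le h).mp this
    · simp [Ioc_eq_empty_of_le h.le]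
  · exact tendsto_one_div_add_atTop_nhds_zero_nat.congr (by intro n; rw [one_div])
  · filter_upwards with n
    set t : ℝ := ((n : ℝ) + 1)⁻¹ with ht
    have h0 : (0 : ℝ) < t := by positivity
    have h1 : t ≤ 1 := by
      rw [ht]
      apply inv_le_one_of_one_le₀
      simp
    rw [← integral_of_le h1]
    have hcong : ∀ x ∈ uIcc t 1, ‖Real.log x‖ = -Real.log x := by
      intro x hx
      rw [uIcc_of_le h1] at hx
      rw [Real.norm_eq_abs, abs_of_nonpos (Real.log_nonpos (le_of_lt (lt_of_lt_of_le h0 hx.1)) hx.2)]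
    rw [integral_congr hcong, intervalIntegral.integral_neg,
      integral_log]
    have hlt : t * Real.log t ≤ 0 :=
      mul_nonpos_of_nonneg_of_nonpos h0.le (Real.log_nonpos h0.le h1)
    simp only [Real.log_one]
    nlinarith

lemma integral_log_zero (c : ℝ) (hc : 0 < c) (hc1 : c ≤ 1) :
    ∫ x in (0:ℝ)..c, Real.log x = c * Real.log c - c := by
  have h := integral_eq_sub_of_hasDeriv_right_of_le (f := fun x => x * Real.log x - x)
    (f' := Real.log) hc.le
    (Continuous.continuousOn (by exact Real.continuous_mul_log.sub continuous_id))
    (fun x hx => by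
      exact (((Real.hasDerivAt_mul_log (ne_of_gt hx.1)).sub (hasDerivAt_id x)).hasDerivWithinAt (s := Ioi x)).congr_deriv (by ring))
    ((log_intervalIntegrable_zero_one).mono_set (by
      rw [uIcc_of_le hc.le, uIcc_of_le (by norm_num : (0:ℝ) ≤ 1)]
      exact Icc_subset_Icc le_rfl hc1))
  simpa using h

/-- For the logistic distribution with scale `s > 0`: the α-quantile is `s·ln(α/(1-α))` and the
α-superquantile equals `s·H(α)/(1-α)` with `H(α) = −α ln α − (1-α) ln(1-α)`. -/
theorem stmt11 (s α : ℝ) (hs : 0 < s) (hα : α ∈ Ioo (0 : ℝ) 1) :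
    (1 / (1 + Real.exp (-(s * Real.log (α / (1 - α))) / s)) = α) ∧
      (1 - α)⁻¹ * ∫ θ in α..1, s * Real.log (θ / (1 - θ)) =
        s * (-α * Real.log α - (1 - α) * Real.log (1 - α)) / (1 - α) := by
  obtain ⟨hα0, hα1⟩ := hα
  have h1α : 0 < 1 - α := by linarith
  constructor
  · have harg : -(s * Real.log (α / (1 - α))) / s = -Real.log (α / (1 - α)) := by
      field_simp
    rw [harg, Real.exp_neg, Real.exp_log (by positivity)]
    rw [inv_div]
    field_simp
    ring
  · -- integrability pieces
    have hintlog : IntervalIntegrable Real.log volume α 1 :=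
      intervalIntegrable_log (μ := volume) (notMem_uIcc_of_lt hα0 one_pos)
    have hint1 : IntervalIntegrable (fun x : ℝ => Real.log (1 - x)) volume α 1 := by
      have := (log_intervalIntegrable_zero_one.mono_set
        (by rw [uIcc_of_le h1α.le, uIcc_of_le (by norm_num : (0:ℝ) ≤ 1)]
            exact Icc_subset_Icc le_rfl (by linarith)) :
          IntervalIntegrable Real.log volume 0 (1 - α))
      have h := (this.comp_sub_left 1).symm
      simpa using h
    have hcong : ∀ θ ∈ uIcc α (1:ℝ),
        Real.log (θ / (1 - θ)) = Real.log θ - Real.log (1 - θ) := by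
      intro θ hθ
      rw [uIcc_of_le hα1.le] at hθ
      rcases eq_or_lt_of_le hθ.2 with h | h
      · subst h; simp
      · exact Real.log_div (ne_of_gt (lt_of_lt_of_le hα0 hθ.1)) (ne_of_gt (by linarith))
    have key : ∫ θ in α..1, Real.log (θ / (1 - θ)) =
        -α * Real.log α - (1 - α) * Real.log (1 - α) := by
      rw [integral_congr hcong,
        integral_sub hintlog hint1,
        integral_log]
      have hsub : ∫ θ in α..1, Real.log (1 - θ) =
          (1 - α) * Real.log (1 - α) - (1 - α) := by
        have h := integral_comp_sub_left (a := α) (b := 1) Real.log 1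
        simp only [sub_self] at h
        rw [h, integral_log_zero (1 - α) h1α (by linarith)]
      rw [hsub]
      simp only [Real.log_one]
      ring
    rw [intervalIntegral.integral_const_mul, key]
    field_simp
end
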